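/- Let X be a complex Banach space and (xₙ*) a bounded sequence in X*. Define δ_w(xₙ*) = sup{ diam clust(x**(xₙ*)) : x** ∈ B_{X**} }, where clust denotes the set of cluster points of a sequence of scalars. Let φ(x*)(x) = Re(x*(x)) be the canonical real-linear isometry X* → (X_R)*. Then δ_w(xₙ*) = δ_w(φ(xₙ*)), i.e., sup over x** ∈ B_{X**} of diam clust(x**(xₙ*)) in ℂ equals sup over real functionals y** ∈ B_{(X_R)**} of diam clust(y**(φ(xₙ*))) in ℝ. -/

import Mathlib

open Filter Metric NormedSpace

section Aux

variable {X : Type*} [NormedAddCommGroup X] [NormedSpace ℂ X]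

/-- The map `x* ↦ Re ∘ x*` from the complex dual to the real dual. -/
noncomputable def phiRe (y : StrongDual ℂ X) : StrongDual ℝ X := Complex.reCLM.comp (y.restrictScalars ℝ)

lemma extend_phiRe (y : StrongDual ℂ X) :
    StrongDual.extendRCLike (𝕜 := ℂ) (phiRe y) = y := by
  ext x
  rw [StrongDual.extendRCLike_apply]
  simp only [phiRe, ContinuousLinearMap.coe_comp', Function.comp_apply,
    ContinuousLinearMap.coe_restrictScalars', Complex.reCLM_apply, map_smul, smul_eq_mul]
  apply Complex.ext <;> simp [Complex.mul_re, Complex.mul_im]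

lemma re_extend (fr : StrongDual ℝ X) (x : X) :
    (StrongDual.extendRCLike (𝕜 := ℂ) fr x).re = fr x := by
  rw [StrongDual.extendRCLike_apply]
  simp

lemma norm_phiRe (y : StrongDual ℂ X) : ‖phiRe y‖ = ‖y‖ := by
  conv_rhs => rw [← extend_phiRe y]
  rw [StrongDual.norm_extendRCLike]

/-- `extendTo𝕜'` as a real-linear isometry from the real dual to the complex dual. -/
noncomputable def extendLI : StrongDual ℝ X →ₗᵢ[ℝ] StrongDual ℂ X where
  toFun fr := StrongDual.extendRCLike (𝕜 := ℂ) fr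
  map_add' f g := by
    ext x
    simp only [StrongDual.extendRCLike_apply, ContinuousLinearMap.add_apply]
    push_cast
    ring
  map_smul' c f := by
    ext x
    simp only [StrongDual.extendRCLike_apply, ContinuousLinearMap.coe_smul',
      Pi.smul_apply, smul_eq_mul, RingHom.id_apply, Complex.real_smul,
      show ∀ r : ℝ, (RCLike.ofReal r : ℂ) = (r : ℂ) from fun _ => rfl]
    push_cast
    ring
  norm_map' fr := StrongDual.norm_extendRCLike fr

/-- `phiRe` as a real-linear isometry. -/
noncomputable def phiReLI : StrongDual ℂ X →ₗᵢ[ℝ] StrongDual ℝ X where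
  toFun := phiRe
  map_add' f g := by ext x; simp [phiRe]
  map_smul' c f := by ext x; simp [phiRe]
  norm_map' := norm_phiRe

end Aux

/-- Cluster points of a norm-bounded sequence lie in the closed ball. -/
lemma clust_subset_closedBall {E : Type*} [NormedAddCommGroup E] {b : ℕ → E} {C : ℝ}
    (hb : ∀ n, ‖b n‖ ≤ C) :
    {z : E | MapClusterPt z atTop b} ⊆ closedBall 0 C := by
  intro z hz
  rw [mem_closedBall, dist_zero_right]
  by_contra h
  push_neg at h
  have hball : ball z (‖z‖ - C) ∈ nhds z := ball_mem_nhds _ (by linarith)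
  obtain ⟨n, hn⟩ := (mapClusterPt_iff_frequently.1 hz _ hball).exists
  rw [mem_ball, dist_eq_norm] at hn
  have h1 : ‖z‖ - ‖b n‖ ≤ ‖b n - z‖ := by
    rw [norm_sub_rev]; exact norm_sub_norm_le _ _
  have := hb n
  linarith

/-- A cluster point of the real parts of a bounded complex sequence is the real part
of a cluster point. -/
lemma exists_clust_of_re {b : ℕ → ℂ} {C : ℝ} (hb : ∀ n, ‖b n‖ ≤ C) {t : ℝ}
    (ht : MapClusterPt t atTop (fun n => (b n).re)) :
    ∃ z : ℂ, MapClusterPt z atTop b ∧ z.re = t := by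
  obtain ⟨ψ, hψ, hlim⟩ := TopologicalSpace.FirstCountableTopology.tendsto_subseq ht
  obtain ⟨z, -, φ, hφ, hz⟩ := tendsto_subseq_of_bounded
    (isBounded_closedBall (x := (0 : ℂ)) (r := C)) (x := b ∘ ψ)
    (fun n => by simpa [dist_zero_right] using hb (ψ n))
  refine ⟨z, ?_, ?_⟩
  · exact MapClusterPt.of_comp ((hψ.comp hφ).tendsto_atTop) (hz.mapClusterPt)
  · have h1 : Tendsto (fun n => (b (ψ (φ n))).re) atTop (nhds z.re) :=
      (Complex.continuous_re.tendsto z).comp hz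
    have h2 : Tendsto (fun n => (b (ψ (φ n))).re) atTop (nhds t) := hlim.comp hφ.tendsto_atTop
    exact tendsto_nhds_unique h1 h2

/-- δ_w of a bounded sequence in the dual of a complex Banach space equals δ_w of its
image under the canonical real-linear isometry φ(x*)(x) = Re(x*(x)). -/
theorem stmt6 {X : Type*} [NormedAddCommGroup X] [NormedSpace ℂ X] [CompleteSpace X]
    (xs : ℕ → StrongDual ℂ X) (C : ℝ) (hb : ∀ n, ‖xs n‖ ≤ C) :
    sSup {d : ℝ | ∃ F : StrongDual ℂ (StrongDual ℂ X), ‖F‖ ≤ 1 ∧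
        d = diam {z : ℂ | MapClusterPt z atTop (fun n => F (xs n))}} =
    sSup {d : ℝ | ∃ G : StrongDual ℝ (StrongDual ℝ X), ‖G‖ ≤ 1 ∧
        d = diam {t : ℝ | MapClusterPt t atTop
          (fun n => G (Complex.reCLM.comp ((xs n).restrictScalars ℝ)))}} := by
  set C' : ℝ := max C 0 with hC'
  have hbC' : ∀ n, ‖xs n‖ ≤ C' := fun n => (hb n).trans (le_max_left _ _)
  set LHS := {d : ℝ | ∃ F : StrongDual ℂ (StrongDual ℂ X), ‖F‖ ≤ 1 ∧
      d = diam {z : ℂ | MapClusterPt z atTop (fun n => F (xs n))}} with hLHS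
  set RHS := {d : ℝ | ∃ G : StrongDual ℝ (StrongDual ℝ X), ‖G‖ ≤ 1 ∧
      d = diam {t : ℝ | MapClusterPt t atTop
        (fun n => G (Complex.reCLM.comp ((xs n).restrictScalars ℝ)))}} with hRHS
  -- boundedness of sequences
  have hFb : ∀ (F : StrongDual ℂ (StrongDual ℂ X)), ‖F‖ ≤ 1 → ∀ n, ‖F (xs n)‖ ≤ C' := by
    intro F hF n
    calc ‖F (xs n)‖ ≤ ‖F‖ * ‖xs n‖ := F.le_opNorm _
    _ ≤ 1 * C' := by
        apply mul_le_mul hF (hbC' n) (norm_nonneg _) zero_le_one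
    _ = C' := one_mul _
  have hGb : ∀ (G : StrongDual ℝ (StrongDual ℝ X)), ‖G‖ ≤ 1 →
      ∀ n, ‖G (Complex.reCLM.comp ((xs n).restrictScalars ℝ))‖ ≤ C' := by
    intro G hG n
    calc ‖G (Complex.reCLM.comp ((xs n).restrictScalars ℝ))‖
        ≤ ‖G‖ * ‖phiRe (xs n)‖ := G.le_opNorm _
    _ ≤ 1 * C' := by
        apply mul_le_mul hG _ (norm_nonneg _) zero_le_one
        rw [norm_phiRe]; exact hbC' n
    _ = C' := one_mul _
  -- bounded above
  have hLbdd : ∀ d ∈ LHS, d ≤ 2 * C' := by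
    rintro d ⟨F, hF, rfl⟩
    calc diam _ ≤ diam (closedBall (0 : ℂ) C') :=
        diam_mono (clust_subset_closedBall (hFb F hF)) isBounded_closedBall
    _ ≤ 2 * C' := diam_closedBall (le_max_right _ _)
  have hRbdd : ∀ d ∈ RHS, d ≤ 2 * C' := by
    rintro d ⟨G, hG, rfl⟩
    calc diam _ ≤ diam (closedBall (0 : ℝ) C') :=
        diam_mono (clust_subset_closedBall (hGb G hG)) isBounded_closedBall
    _ ≤ 2 * C' := diam_closedBall (le_max_right _ _)
  have hLBddAbove : BddAbove LHS := ⟨2 * C', fun d hd => hLbdd d hd⟩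
  have hRBddAbove : BddAbove RHS := ⟨2 * C', fun d hd => hRbdd d hd⟩
  have hLnonneg : 0 ≤ sSup LHS := Real.sSup_nonneg (by rintro d ⟨F, hF, rfl⟩; exact diam_nonneg)
  have hRnonneg : 0 ≤ sSup RHS := Real.sSup_nonneg (by rintro d ⟨G, hG, rfl⟩; exact diam_nonneg)
  apply le_antisymm
  · -- LHS ≤ RHS
    apply Real.sSup_le _ hRnonneg
    rintro d ⟨F, hF, rfl⟩
    apply diam_le_of_forall_dist_le hRnonneg
    intro z₁ hz₁ z₂ hz₂
    rcases eq_or_ne z₁ z₂ with h | h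
    · simpa [h] using hRnonneg
    -- rotate: u with ‖u‖ = 1 and u * (z₁ - z₂) = ‖z₁ - z₂‖
    set c : ℂ := z₁ - z₂ with hc
    have hc0 : c ≠ 0 := sub_ne_zero.2 h
    set u : ℂ := (starRingEnd ℂ) c / (‖c‖ : ℂ) with hu
    have hnu : ‖u‖ = 1 := by
      rw [hu, norm_div, RCLike.norm_conj, Complex.norm_real, Real.norm_eq_abs,
        abs_of_nonneg (norm_nonneg c), div_self (norm_ne_zero_iff.2 hc0)]
    have hcnz : (‖c‖ : ℂ) ≠ 0 := by
      exact_mod_cast norm_ne_zero_iff.2 hc0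
    have huc : u * c = (‖c‖ : ℂ) := by
      have h1 : (starRingEnd ℂ) c * c = ((‖c‖ ^ 2 : ℝ) : ℂ) := by
        rw [mul_comm, Complex.mul_conj]
        norm_cast
        simp [Complex.normSq_eq_norm_sq]
      rw [hu, div_mul_eq_mul_div, h1]
      rw [show ((‖c‖ ^ 2 : ℝ) : ℂ) = (‖c‖ : ℂ) ^ 2 by push_cast; ring, sq,
        mul_div_assoc, div_self hcnz, mul_one]
    set F' : StrongDual ℂ (StrongDual ℂ X) := u • F with hF'def
    have hF'norm : ‖F'‖ ≤ 1 := by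
      refine ContinuousLinearMap.opNorm_le_bound _ zero_le_one (fun v => ?_)
      rw [hF'def, ContinuousLinearMap.smul_apply, norm_smul, hnu, one_mul, one_mul]
      exact (F.le_opNorm v).trans (mul_le_of_le_one_left (norm_nonneg _) hF)
    set G : StrongDual ℝ (StrongDual ℝ X) :=
      Complex.reCLM.comp ((F'.restrictScalars ℝ).comp
        (extendLI (X := X)).toContinuousLinearMap) with hGdef
    have hGapp : ∀ v : StrongDual ℝ X, G v = (F' (StrongDual.extendRCLike (𝕜 := ℂ) v)).re :=
      fun v => rfl
    have hGn : ‖G‖ ≤ 1 := by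
      apply ContinuousLinearMap.opNorm_le_bound _ zero_le_one
      intro v
      rw [hGapp]
      calc ‖(F' (StrongDual.extendRCLike (𝕜 := ℂ) v)).re‖
          ≤ ‖F' (StrongDual.extendRCLike (𝕜 := ℂ) v)‖ := by
            rw [Real.norm_eq_abs]; exact Complex.abs_re_le_norm _
      _ ≤ ‖F'‖ * ‖StrongDual.extendRCLike (𝕜 := ℂ) v‖ := F'.le_opNorm _
      _ = ‖F'‖ * ‖v‖ := by rw [StrongDual.norm_extendRCLike]
      _ ≤ 1 * ‖v‖ := mul_le_mul_of_nonneg_right hF'norm (norm_nonneg _)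
    -- the G-sequence is the real part of u • F applied to xs
    have hGseq : ∀ n, G (Complex.reCLM.comp ((xs n).restrictScalars ℝ)) = (u * F (xs n)).re := by
      intro n
      rw [show Complex.reCLM.comp ((xs n).restrictScalars ℝ) = phiRe (xs n) from rfl,
        hGapp, extend_phiRe]
      rw [hF'def]
      simp
    set T : Set ℝ := {t : ℝ | MapClusterPt t atTop
      (fun n => G (Complex.reCLM.comp ((xs n).restrictScalars ℝ)))} with hT
    have hTbdd : Bornology.IsBounded T :=
      isBounded_closedBall.subset (clust_subset_closedBall (hGb G hGn))
    have hmem : ∀ z : ℂ, MapClusterPt z atTop (fun n => F (xs n)) → (u * z).re ∈ T := by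
      intro z hz
      have hcont : Continuous (fun w : ℂ => (u * w).re) :=
        Complex.continuous_re.comp (continuous_const.mul continuous_id)
      have := hz.continuousAt_comp (hcont.continuousAt)
      rw [hT]
      simp only [Set.mem_setOf_eq]
      have heq : (fun n => G (Complex.reCLM.comp ((xs n).restrictScalars ℝ))) =
          ((fun w : ℂ => (u * w).re) ∘ (fun n => F (xs n))) := by
        funext n; rw [hGseq]; rfl
      rw [heq]
      exact this
    have ht₁ : (u * z₁).re ∈ T := hmem z₁ hz₁
    have ht₂ : (u * z₂).re ∈ T := hmem z₂ hz₂
    have hdist : dist z₁ z₂ = dist ((u * z₁).re) ((u * z₂).re) := by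
      rw [Real.dist_eq, ← Complex.sub_re, ← mul_sub, ← hc, huc]
      simp [dist_eq_norm, hc]
    calc dist z₁ z₂ = dist ((u * z₁).re) ((u * z₂).re) := hdist
    _ ≤ diam T := dist_le_diam_of_mem hTbdd ht₁ ht₂
    _ ≤ sSup RHS := le_csSup hRBddAbove ⟨G, hGn, rfl⟩
  · -- RHS ≤ LHS
    apply Real.sSup_le _ hLnonneg
    rintro d ⟨G, hG, rfl⟩
    -- F := extension of G ∘ phiRe
    set F : StrongDual ℂ (StrongDual ℂ X) :=
      StrongDual.extendRCLike (𝕜 := ℂ) (G.comp (phiReLI (X := X)).toContinuousLinearMap)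
      with hFdef
    have hFnorm : ‖F‖ ≤ 1 := by
      rw [hFdef, StrongDual.norm_extendRCLike]
      calc ‖G.comp (phiReLI (X := X)).toContinuousLinearMap‖
          ≤ ‖G‖ * ‖(phiReLI (X := X)).toContinuousLinearMap‖ := ContinuousLinearMap.opNorm_comp_le _ _
      _ ≤ 1 * 1 := by
          apply mul_le_mul hG (phiReLI (X := X)).norm_toContinuousLinearMap_le (norm_nonneg _)
            zero_le_one
      _ = 1 := one_mul 1
    have hre : ∀ n, (F (xs n)).re = G (Complex.reCLM.comp ((xs n).restrictScalars ℝ)) := by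
      intro n
      rw [hFdef, re_extend]
      rfl
    -- diam clust(Re F xs) ≤ diam clust(F xs)
    have hSbdd : Bornology.IsBounded {z : ℂ | MapClusterPt z atTop (fun n => F (xs n))} :=
      isBounded_closedBall.subset (clust_subset_closedBall (hFb F hFnorm))
    have key : diam {t : ℝ | MapClusterPt t atTop
        (fun n => G (Complex.reCLM.comp ((xs n).restrictScalars ℝ)))} ≤
        diam {z : ℂ | MapClusterPt z atTop (fun n => F (xs n))} := by
      apply diam_le_of_forall_dist_le diam_nonneg
      intro t₁ ht₁ t₂ ht₂
      simp only [Set.mem_setOf_eq, ← hre] at ht₁ ht₂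
      obtain ⟨z₁, hz₁, hz₁re⟩ := exists_clust_of_re (hFb F hFnorm) ht₁
      obtain ⟨z₂, hz₂, hz₂re⟩ := exists_clust_of_re (hFb F hFnorm) ht₂
      calc dist t₁ t₂ = |z₁.re - z₂.re| := by rw [Real.dist_eq, hz₁re, hz₂re]
      _ ≤ ‖z₁ - z₂‖ := by
          rw [← Complex.sub_re]; exact (Complex.abs_re_le_norm _)
      _ = dist z₁ z₂ := (dist_eq_norm _ _).symm
      _ ≤ diam _ := dist_le_diam_of_mem hSbdd hz₁ hz₂
    exact key.trans (le_csSup hLBddAbove ⟨F, hFnorm, rfl⟩)
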